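/- Let L ≥ 2, n ≥ 1, m = n(L−1), let {h^k_j}_{j≥0} ⊂ ℂ (1 ≤ k ≤ L−1) be arbitrary sequences, let x ∈ ℂ, and define new sequences g^k_j := h^k_j − x·h^k_{j+1}. Then: (a) det of the (m+1)×(m+1) matrix with first row (1, x, x^2, …, x^m) and remaining rows the stacked blocks A^1_m(n,m+1), …, A^{L−1}_m(n,m+1) equals det of the m×m matrix with rows the stacked blocks G^1_{m−1}(n,m), …, G^{L−1}_{m−1}(n,m); and (b) for each 1 ≤ k ≤ L−1, det of the m×m matrix with first row (1, x, …, x^{m−1}) and remaining rows the stacked blocks A^1_m(n,m), …, A^{k−1}_m(n,m), A^k_m(n−1,m), A^{k+1}_{m−1}(n,m), …, A^{L−1}_{m−1}(n,m) equals det of the (m−1)×(m−1) matrix with rows the stacked blocks G^1_{m−1}(n,m−1), …, G^{k−1}_{m−1}(n,m−1), G^k_{m−1}(n−1,m−1), G^{k+1}_{m−2}(n,m−1), …, G^{L−1}_{m−2}(n,m−1). -/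

import Mathlib

noncomputable section

private lemma colop {m : ℕ} (x : ℂ) (M : Matrix (Fin (m+1)) (Fin (m+1)) ℂ)
    (hrow : ∀ c, M 0 c = x ^ (c : ℕ)) :
    M.det = Matrix.det (Matrix.of fun r c : Fin m =>
      M r.succ c.succ - x * M r.succ c.castSucc) := by
  classical
  set T : Matrix (Fin (m+1)) (Fin (m+1)) ℂ :=
    fun j c => if (j : ℕ) = (c : ℕ) then 1 else if (j : ℕ) + 1 = (c : ℕ) then -x else 0 with hT
  have hTtri : T.BlockTriangular id := by
    intro i j hij
    simp only [id] at hij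
    have : (j : ℕ) < (i : ℕ) := hij
    simp only [hT]
    rw [if_neg (by omega), if_neg (by omega)]
  have hdetT : T.det = 1 := by
    rw [Matrix.det_of_upperTriangular hTtri]
    simp [hT]
  have hentry0 : ∀ r, (M * T) r 0 = M r 0 := by
    intro r
    rw [Matrix.mul_apply]
    have key : ∀ j : Fin (m+1), M r j * T j 0 = if j = 0 then M r 0 else 0 := by
      intro j
      by_cases hj : j = 0
      · subst hj; simp [hT]
      · have hv : (j : ℕ) ≠ 0 := fun hc => hj (Fin.ext hc)
        simp [hT, hv, hj]
    simp [key]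
  have hentry : ∀ r (c : Fin m), (M * T) r c.succ = M r c.succ - x * M r c.castSucc := by
    intro r c
    rw [Matrix.mul_apply]
    have key : ∀ j : Fin (m+1), M r j * T j c.succ =
        (if j = c.succ then M r c.succ else 0) +
        (if j = c.castSucc then -x * M r c.castSucc else 0) := by
      intro j
      have hvs : (c.succ : ℕ) = (c : ℕ) + 1 := Fin.val_succ c
      have hvc : (c.castSucc : ℕ) = (c : ℕ) := Fin.coe_castSucc c
      by_cases hj1 : j = c.succ
      · subst hj1
        have h2 : c.succ ≠ c.castSucc := by
          intro hc
          have := congrArg Fin.val hc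
          omega
        simp [hT, h2, hvs]
      · by_cases hj2 : j = c.castSucc
        · subst hj2
          rw [if_neg hj1, if_pos rfl]
          simp only [hT]
          rw [if_neg (by omega), if_pos (by omega)]
          ring
        · have h1 : (j : ℕ) ≠ (c : ℕ) + 1 := by
            intro hc; exact hj1 (Fin.ext (by omega))
          have h2 : (j : ℕ) ≠ (c : ℕ) := by
            intro hc; exact hj2 (Fin.ext (by omega))
          rw [if_neg hj1, if_neg hj2]
          simp only [hT]
          rw [if_neg (by omega), if_neg (by omega)]
          ring
    rw [Finset.sum_congr rfl (fun j _ => key j), Finset.sum_add_distrib]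
    simp [sub_eq_add_neg]
  have hrow0 : ∀ c : Fin (m+1), (M * T) 0 c = if c = 0 then 1 else 0 := by
    intro c
    induction c using Fin.cases with
    | zero => simp [hentry0, hrow]
    | succ c =>
      rw [hentry 0 c, hrow, hrow]
      have : c.succ ≠ (0 : Fin (m+1)) := Fin.succ_ne_zero c
      rw [if_neg this, Fin.val_succ, Fin.coe_castSucc, pow_succ]
      ring
  have hdet : M.det = (M * T).det := by rw [Matrix.det_mul, hdetT, mul_one]
  rw [hdet, Matrix.det_succ_row_zero]
  rw [Finset.sum_eq_single 0]
  · rw [hrow0 0, if_pos rfl]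
    simp only [Fin.val_zero, pow_zero, one_mul, mul_one, Fin.succAbove_zero]
    congr 1
    ext r c
    simp [Matrix.submatrix_apply, hentry]
  · intro j _ hj
    rw [hrow0 j, if_neg hj]
    ring
  · intro hc; exact absurd (Finset.mem_univ 0) hc

/-- A sequence `ℕ → ℂ` extended by `0` to negative indices. -/
def hz (h : ℕ → ℕ → ℂ) (k : ℕ) : ℤ → ℂ := fun j => if 0 ≤ j then h k j.toNat else 0

/-- Entry `(r', c)` (0-indexed) of the stacked row-blocks
`A^1_m(n,·), …, A^{k-1}_m(n,·), A^k_m(n-1,·), A^{k+1}_{m-1}(n,·), …, A^{L-1}_{m-1}(n,·)`,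
where `m` is the common upper lower-index parameter. -/
def stackJ (n k m : ℕ) (a : ℕ → ℤ → ℂ) (r' c : ℕ) : ℂ :=
  if r' < (k - 1) * n then
    a (r' / n + 1) ((m : ℤ) + ((r' % n : ℕ) : ℤ) - (c : ℤ))
  else if r' < k * n - 1 then
    a k ((m : ℤ) + (((r' - (k - 1) * n : ℕ)) : ℤ) - (c : ℤ))
  else
    a ((r' - (k * n - 1)) / n + k + 1)
      ((m : ℤ) - 1 + ((((r' - (k * n - 1)) % n : ℕ)) : ℤ) - (c : ℤ))

private lemma hz_sub (h : ℕ → ℕ → ℂ) (x : ℂ) (g : ℕ → ℤ → ℂ)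
    (hg : ∀ k : ℕ, ∀ j : ℤ,
      g k j = if 0 ≤ j then h k j.toNat - x * h k (j.toNat + 1) else 0)
    (k : ℕ) (j : ℤ) (hj : 0 ≤ j) :
    hz h k j - x * hz h k (j + 1) = g k j := by
  have hj1 : (0:ℤ) ≤ j + 1 := by omega
  have ht : (j + 1).toNat = j.toNat + 1 := by omega
  simp [hz, hg, hj, hj1, ht]

private lemma partb_core (n k m' : ℕ)
    (h : ℕ → ℕ → ℂ) (x : ℂ) (g : ℕ → ℤ → ℂ)
    (hg : ∀ k : ℕ, ∀ j : ℤ,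
      g k j = if 0 ≤ j then h k j.toNat - x * h k (j.toNat + 1) else 0) :
    (Matrix.of fun r c : Fin (m' + 1) =>
        if (r : ℕ) = 0 then x ^ (c : ℕ)
        else stackJ n k (m' + 1) (hz h) ((r : ℕ) - 1) (c : ℕ)).det =
      (Matrix.of fun r c : Fin m' =>
        stackJ n k m' g (r : ℕ) (c : ℕ)).det := by
  rw [colop x _ (fun c => by simp)]
  congr 1
  ext r c
  have hc := c.isLt
  simp only [Matrix.of_apply, Fin.val_succ, Fin.coe_castSucc]
  have hr0 : ¬((r : ℕ) + 1 = 0) := by omega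
  simp only [if_neg hr0, Nat.add_sub_cancel]
  simp only [stackJ]
  split_ifs with h1 h2
  · have e1 : ((m' + 1 : ℕ) : ℤ) + (((r : ℕ) % n : ℕ) : ℤ) - (((c : ℕ) + 1 : ℕ) : ℤ)
        = (m' : ℤ) + (((r : ℕ) % n : ℕ) : ℤ) - ((c : ℕ) : ℤ) := by push_cast; ring
    have e2 : ((m' + 1 : ℕ) : ℤ) + (((r : ℕ) % n : ℕ) : ℤ) - ((c : ℕ) : ℤ)
        = ((m' : ℤ) + (((r : ℕ) % n : ℕ) : ℤ) - ((c : ℕ) : ℤ)) + 1 := by push_cast; ring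
    rw [e1, e2]
    exact hz_sub h x g hg _ _ (by omega)
  · have e1 : ((m' + 1 : ℕ) : ℤ) + (((r : ℕ) - (k - 1) * n : ℕ) : ℤ) - (((c : ℕ) + 1 : ℕ) : ℤ)
        = (m' : ℤ) + (((r : ℕ) - (k - 1) * n : ℕ) : ℤ) - ((c : ℕ) : ℤ) := by push_cast; ring
    have e2 : ((m' + 1 : ℕ) : ℤ) + (((r : ℕ) - (k - 1) * n : ℕ) : ℤ) - ((c : ℕ) : ℤ)
        = ((m' : ℤ) + (((r : ℕ) - (k - 1) * n : ℕ) : ℤ) - ((c : ℕ) : ℤ)) + 1 := by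
      push_cast; ring
    rw [e1, e2]
    exact hz_sub h x g hg _ _ (by omega)
  · have e1 : ((m' + 1 : ℕ) : ℤ) - 1 + ((((r : ℕ) - (k * n - 1)) % n : ℕ) : ℤ) - (((c : ℕ) + 1 : ℕ) : ℤ)
        = (m' : ℤ) - 1 + ((((r : ℕ) - (k * n - 1)) % n : ℕ) : ℤ) - ((c : ℕ) : ℤ) := by
      push_cast; ring
    have e2 : ((m' + 1 : ℕ) : ℤ) - 1 + ((((r : ℕ) - (k * n - 1)) % n : ℕ) : ℤ) - ((c : ℕ) : ℤ)
        = ((m' : ℤ) - 1 + ((((r : ℕ) - (k * n - 1)) % n : ℕ) : ℤ) - ((c : ℕ) : ℤ)) + 1 := by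
      push_cast; ring
    rw [e1, e2]
    exact hz_sub h x g hg _ _ (by omega)

/-- Contracting the first row of monomial entries evaluated at `x` against the
Toeplitz blocks of `h` produces the Toeplitz blocks of `g^k_j = h^k_j - x·h^k_{j+1}`. -/
theorem eval_x_identities (L n : ℕ) (hL : 2 ≤ L) (hn : 0 < n)
    (h : ℕ → ℕ → ℂ) (x : ℂ)
    (g : ℕ → ℤ → ℂ)
    (hg : ∀ k : ℕ, ∀ j : ℤ,
      g k j = if 0 ≤ j then h k j.toNat - x * h k (j.toNat + 1) else 0) :
    (Matrix.det (Matrix.of fun r c : Fin (n * (L - 1) + 1) =>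
        if (r : ℕ) = 0 then x ^ (c : ℕ)
        else hz h (((r : ℕ) - 1) / n + 1)
          (((n * (L - 1) : ℕ) : ℤ) + (((((r : ℕ) - 1) % n : ℕ)) : ℤ) - ((c : ℕ) : ℤ))) =
      Matrix.det (Matrix.of fun r c : Fin (n * (L - 1)) =>
        g ((r : ℕ) / n + 1)
          (((n * (L - 1) : ℕ) : ℤ) - 1 + ((((r : ℕ) % n : ℕ)) : ℤ) - ((c : ℕ) : ℤ)))) ∧
    (∀ k, 1 ≤ k → k < L →
      Matrix.det (Matrix.of fun r c : Fin (n * (L - 1)) =>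
          if (r : ℕ) = 0 then x ^ (c : ℕ)
          else stackJ n k (n * (L - 1)) (hz h) ((r : ℕ) - 1) (c : ℕ)) =
        Matrix.det (Matrix.of fun r c : Fin (n * (L - 1) - 1) =>
          stackJ n k (n * (L - 1) - 1) g (r : ℕ) (c : ℕ))) := by
  constructor
  · set m := n * (L - 1) with hm
    rw [colop x _ (fun c => by simp)]
    congr 1
    ext r c
    have hc := c.isLt
    simp only [Matrix.of_apply, Fin.val_succ, Fin.coe_castSucc]
    have hr0 : ¬((r : ℕ) + 1 = 0) := by omega
    simp only [if_neg hr0, Nat.add_sub_cancel]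
    have e1 : (m : ℤ) + (((r : ℕ) % n : ℕ) : ℤ) - (((c : ℕ) + 1 : ℕ) : ℤ)
        = (m : ℤ) - 1 + (((r : ℕ) % n : ℕ) : ℤ) - ((c : ℕ) : ℤ) := by push_cast; ring
    have e2 : (m : ℤ) + (((r : ℕ) % n : ℕ) : ℤ) - ((c : ℕ) : ℤ)
        = ((m : ℤ) - 1 + (((r : ℕ) % n : ℕ) : ℤ) - ((c : ℕ) : ℤ)) + 1 := by push_cast; ring
    rw [e1, e2]
    exact hz_sub h x g hg _ _ (by omega)
  · intro k hk1 hkL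
    have hm1 : 1 ≤ n * (L - 1) := by
      calc 1 = 1 * 1 := by ring
      _ ≤ n * (L - 1) := Nat.mul_le_mul hn (by omega)
    obtain ⟨m', hm'⟩ : ∃ m', n * (L - 1) = m' + 1 := ⟨n * (L - 1) - 1, by omega⟩
    have hm2 : n * (L - 1) - 1 = m' := by omega
    have hL1 : (Matrix.of fun r c : Fin (n * (L - 1)) =>
          if (r : ℕ) = 0 then x ^ (c : ℕ)
          else stackJ n k (n * (L - 1)) (hz h) ((r : ℕ) - 1) (c : ℕ))
        = (Matrix.of fun r c : Fin (m' + 1) =>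
            if (r : ℕ) = 0 then x ^ (c : ℕ)
            else stackJ n k (m' + 1) (hz h) ((r : ℕ) - 1) (c : ℕ)).submatrix
          (finCongr hm') (finCongr hm') := by
      ext r c
      simp [hm']
      by_cases hr : (r : ℕ) = 0 <;> simp [hr, Fin.ext_iff]
    have hR1 : (Matrix.of fun r c : Fin (n * (L - 1) - 1) =>
          stackJ n k (n * (L - 1) - 1) g (r : ℕ) (c : ℕ))
        = (Matrix.of fun r c : Fin m' =>
            stackJ n k m' g (r : ℕ) (c : ℕ)).submatrix
          (finCongr hm2) (finCongr hm2) := by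
      ext r c
      simp [hm2]
    rw [hL1, hR1, Matrix.det_submatrix_equiv_self, Matrix.det_submatrix_equiv_self]
    exact partb_core n k m' h x g hg
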